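/- arXiv:2405.03310 — 3 statements merged into one kernel-verified Lean document; each statement's English description precedes it below -/
import Mathlib

section
/- Let Γ be a locally semicomplete commutative weakly distance-regular digraph such that (1,2) is pure. If there exist vertices x,y,z and integers i > 1 and q > 0 with ∂̃(x,y)=(1,2), ∂̃(y,z)=(1,q) and ∂̃(x,z)=(2,i), then i = 2 and q ∈ {2,3}. -/
variable {V : Type*}

/-- There is a directed walk of length `n` from `x` to `y` in the digraph with arc relation `A`. -/
def HasWalk (A : V → V → Prop) : ℕ → V → V → Prop
  | 0, x, y => x = y
  | n + 1, x, y => ∃ z, A x z ∧ HasWalk A n z y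

/-- The distance `∂(x,y)`: the length of a shortest directed path from `x` to `y`. -/
noncomputable def ddist (A : V → V → Prop) (x y : V) : ℕ :=
  sInf {n : ℕ | HasWalk A n x y}

/-- The two-way distance `∂̃(x,y) = (∂(x,y), ∂(y,x))`. -/
noncomputable def tdist (A : V → V → Prop) (x y : V) : ℕ × ℕ :=
  (ddist A x y, ddist A y x)

/-- The two-way distance set `∂̃(Γ)`. -/
def tset (A : V → V → Prop) : Set (ℕ × ℕ) :=
  {d : ℕ × ℕ | ∃ x y : V, tdist A x y = d}

/-- A (finite) weakly distance-regular digraph: a loopless strongly connected digraph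
together with its intersection numbers `p h i j = p^{h}_{i,j}`, where
`p h i j = 0` by convention whenever one of `h`, `i`, `j` is not a two-way distance. -/
structure WDRDigraph (V : Type*) [Fintype V] where
  Adj : V → V → Prop
  loopless : ∀ v : V, ¬ Adj v v
  strongly_connected : ∀ x y : V, ∃ n : ℕ, HasWalk Adj n x y
  p : ℕ × ℕ → ℕ × ℕ → ℕ × ℕ → ℕ
  card_inter : ∀ (i j : ℕ × ℕ) (x y : V),
    {z : V | tdist Adj x z = i ∧ tdist Adj z y = j}.ncard = p (tdist Adj x y) i j
  p_not_in : ∀ h i j : ℕ × ℕ,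
    h ∉ tset Adj ∨ i ∉ tset Adj ∨ j ∉ tset Adj → p h i j = 0

variable [Fintype V]

/-- A weakly distance-regular digraph is commutative if `p^{h}_{i,j} = p^{h}_{j,i}`
for all two-way distances `h`, `i`, `j`. -/
def WDRDigraph.Commutative (G : WDRDigraph V) : Prop :=
  ∀ h i j : ℕ × ℕ, h ∈ tset G.Adj → i ∈ tset G.Adj → j ∈ tset G.Adj →
    G.p h i j = G.p h j i

/-- A digraph is semicomplete if any two distinct vertices are joined by at least one arc. -/
def Semicomplete (A : V → V → Prop) : Prop :=
  ∀ x y : V, x ≠ y → A x y ∨ A y x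

/-- A digraph is locally semicomplete if the out-neighbourhood and the in-neighbourhood of
every vertex induce semicomplete digraphs. -/
def LocallySemicomplete (A : V → V → Prop) : Prop :=
  ∀ x y z : V, y ≠ z →
    ((A x y → A x z → (A y z ∨ A z y)) ∧ (A y x → A z x → (A y z ∨ A z y)))

/-- A circuit of length `q`, encoded as a function `ZMod q → V` each of whose
consecutive pairs (cyclically) is an arc. -/
def IsCircuit (A : V → V → Prop) (q : ℕ) (c : ZMod q → V) : Prop :=
  ∀ i : ZMod q, A (c i) (c (i + 1))

/-- The arc `(x, y)` (of type `(1, q-1)`) is pure: every circuit of length `q`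
containing it consists of arcs of type `(1, q-1)`. -/
def PureArc (A : V → V → Prop) (q : ℕ) (x y : V) : Prop :=
  ∀ c : ZMod q → V, IsCircuit A q c → c 0 = x → c 1 = y →
    ∀ i : ZMod q, tdist A (c i) (c (i + 1)) = (1, q - 1)

/-- `(1, q-1)` is pure: every arc of type `(1, q-1)` is pure. -/
def TypePure (A : V → V → Prop) (q : ℕ) : Prop :=
  ∀ x y : V, tdist A x y = (1, q - 1) → PureArc A q x y

/-- `(1, q-1)` is mixed: some arc of type `(1, q-1)` is not pure. -/
def TypeMixed (A : V → V → Prop) (q : ℕ) : Prop :=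
  ∃ x y : V, tdist A x y = (1, q - 1) ∧ ¬ PureArc A q x y

/-- The number `k_i` of vertices at two-way distance `i` from `x`
(independent of `x` in a weakly distance-regular digraph). -/
noncomputable def kval (A : V → V → Prop) (i : ℕ × ℕ) (x : V) : ℕ :=
  {y : V | tdist A x y = i}.ncard

section Helpers

lemma hasWalk_one {A : V → V → Prop} {x y : V} (h : A x y) : HasWalk A 1 x y :=
  ⟨y, h, rfl⟩

lemma adj_of_hasWalk_one {A : V → V → Prop} {x y : V} (h : HasWalk A 1 x y) : A x y := by
  obtain ⟨u, hu, h0⟩ := h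
  exact (show u = y from h0) ▸ hu

lemma ddist_le {A : V → V → Prop} {n : ℕ} {x y : V} (h : HasWalk A n x y) :
    ddist A x y ≤ n := Nat.sInf_le h

/-- Purity of the type `(1,2)` applied to a triangle `x → y → w → x` whose first
arc has type `(1,2)`. -/
lemma pure_triangle {A : V → V → Prop} (hpure : TypePure A 3) {x y w : V}
    (hxy : tdist A x y = (1, 2)) (haxy : A x y) (hyw : A y w) (hwx : A w x) :
    tdist A y w = (1, 2) ∧ tdist A w x = (1, 2) := by
  classical
  set c : ZMod 3 → V := fun j => if j = 0 then x else if j = 1 then y else w with hc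
  have e0 : c 0 = x := if_pos rfl
  have e1 : c 1 = y := by
    show (if (1 : ZMod 3) = 0 then x else if (1 : ZMod 3) = 1 then y else w) = y
    rw [if_neg (by decide), if_pos rfl]
  have e2 : c 2 = w := by
    show (if (2 : ZMod 3) = 0 then x else if (2 : ZMod 3) = 1 then y else w) = w
    rw [if_neg (by decide), if_neg (by decide)]
  have hcirc : IsCircuit A 3 c := by
    intro j
    have h3 : ∀ k : ZMod 3, k = 0 ∨ k = 1 ∨ k = 2 := by decide
    rcases h3 j with rfl | rfl | rfl
    · rw [e0, show (0 + 1 : ZMod 3) = 1 by decide, e1]; exact haxy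
    · rw [e1, show (1 + 1 : ZMod 3) = 2 by decide, e2]; exact hyw
    · rw [e2, show (2 + 1 : ZMod 3) = 0 by decide, e0]; exact hwx
  have hP := hpure x y hxy c hcirc e0 e1
  constructor
  · have h := hP 1
    rw [e1, show (1 + 1 : ZMod 3) = 2 by decide, e2] at h
    exact h
  · have h := hP 2
    rw [e2, show (2 + 1 : ZMod 3) = 0 by decide, e0] at h
    exact h

end Helpers

/-- in a locally semicomplete commutative weakly distance-regular digraph such that
`(1,2)` is pure, if `∂̃(x,y) = (1,2)`, `∂̃(y,z) = (1,q)` and `∂̃(x,z) = (2,i)` with `i > 1`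
and `q > 0`, then `i = 2` and `q ∈ {2,3}`. -/
theorem statement4 [Nonempty V] (G : WDRDigraph V)
    (hls : LocallySemicomplete G.Adj) (hcomm : G.Commutative)
    (hpure : TypePure G.Adj 3) :
    ∀ (x y z : V) (i q : ℕ), 1 < i → 0 < q →
      tdist G.Adj x y = (1, 2) → tdist G.Adj y z = (1, q) → tdist G.Adj x z = (2, i) →
      i = 2 ∧ (q = 2 ∨ q = 3) := by
  intro x y z i q hi hq hxy hyz hxz
  -- basic tools
  have hwalkmin : ∀ a b : V, HasWalk G.Adj (ddist G.Adj a b) a b :=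
    fun a b => Nat.sInf_mem (G.strongly_connected a b)
  have adj1 : ∀ a b : V, ddist G.Adj a b = 1 → G.Adj a b :=
    fun a b h => adj_of_hasWalk_one (h ▸ hwalkmin a b)
  have dle1 : ∀ a b : V, G.Adj a b → ddist G.Adj a b ≤ 1 :=
    fun a b h => ddist_le (hasWalk_one h)
  have dself : ∀ a : V, ddist G.Adj a a = 0 :=
    fun a => Nat.le_zero.mp (ddist_le (rfl : HasWalk G.Adj 0 a a))
  -- component distances
  have dxy : ddist G.Adj x y = 1 := congrArg Prod.fst hxy
  have dyx : ddist G.Adj y x = 2 := congrArg Prod.snd hxy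
  have dyz : ddist G.Adj y z = 1 := congrArg Prod.fst hyz
  have dzy : ddist G.Adj z y = q := congrArg Prod.snd hyz
  have dxz : ddist G.Adj x z = 2 := congrArg Prod.fst hxz
  have dzx : ddist G.Adj z x = i := congrArg Prod.snd hxz
  have haxy : G.Adj x y := adj1 x y dxy
  have hayz : G.Adj y z := adj1 y z dyz
  have hnxz : ¬ G.Adj x z := fun h => by have := dle1 x z h; omega
  have hnzx : ¬ G.Adj z x := fun h => by have := dle1 z x h; omega
  have hxnez : x ≠ z := by
    intro h
    rw [h, dself z] at dxz
    exact absurd dxz (by norm_num)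
  -- obtain w with y → w → x
  have h2w : HasWalk G.Adj 2 y x := by rw [← dyx]; exact hwalkmin y x
  obtain ⟨w, hyw, hw1⟩ := h2w
  have hwx : G.Adj w x := adj_of_hasWalk_one hw1
  have hwnez : w ≠ z := fun h => hnzx (h ▸ hwx)
  -- purity on the triangle x → y → w → x
  obtain ⟨htyw, htwx⟩ := pure_triangle hpure hxy haxy hyw hwx
  have dwy : ddist G.Adj w y = 2 := congrArg Prod.snd htyw
  -- w and z are out-neighbours of y, so they are adjacent; A w z is impossible
  have hazw : G.Adj z w := by
    rcases (hls y z w hwnez.symm).1 hayz hyw with h | h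
    · exact h
    · -- A w z : then x and z are out-neighbours of w
      rcases (hls w x z hxnez).1 hwx h with h' | h'
      · exact absurd h' hnxz
      · exact absurd h' hnzx
  -- i = 2
  have hi2 : i = 2 := by
    have : ddist G.Adj z x ≤ 2 :=
      ddist_le (⟨w, hazw, hasWalk_one hwx⟩ : HasWalk G.Adj 2 z x)
    omega
  -- q ≤ 3
  have hq3 : q ≤ 3 := by
    have hw2 : HasWalk G.Adj 2 w y := by rw [← dwy]; exact hwalkmin w y
    have : ddist G.Adj z y ≤ 3 :=
      ddist_le (⟨w, hazw, hw2⟩ : HasWalk G.Adj 3 z y)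
    omega
  -- q ≠ 1 via commutativity
  have hq1 : q ≠ 1 := by
    intro h1
    have htyz : tdist G.Adj y z = (1, 1) := by rw [hyz, h1]
    have htxz : tdist G.Adj x z = (2, 2) := by rw [hxz, hi2]
    have hm1 : ((2 : ℕ), (2 : ℕ)) ∈ tset G.Adj := ⟨x, z, htxz⟩
    have hm2 : ((1 : ℕ), (2 : ℕ)) ∈ tset G.Adj := ⟨x, y, hxy⟩
    have hm3 : ((1 : ℕ), (1 : ℕ)) ∈ tset G.Adj := ⟨y, z, htyz⟩
    have hcard1 := G.card_inter (1, 2) (1, 1) x z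
    have hcard2 := G.card_inter (1, 1) (1, 2) x z
    rw [htxz] at hcard1 hcard2
    have hcm := hcomm (2, 2) (1, 2) (1, 1) hm1 hm2 hm3
    have hypos :
        0 < {u : V | tdist G.Adj x u = (1, 2) ∧ tdist G.Adj u z = (1, 1)}.ncard :=
      (Set.ncard_pos (Set.toFinite _)).mpr ⟨y, hxy, htyz⟩
    have hpos2 :
        0 < {u : V | tdist G.Adj x u = (1, 1) ∧ tdist G.Adj u z = (1, 2)}.ncard := by
      rw [hcard2, ← hcm, ← hcard1]; exact hypos
    obtain ⟨u, hu1, hu2⟩ := (Set.ncard_pos (Set.toFinite _)).mp hpos2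
    have haux : G.Adj u x := adj1 u x (congrArg Prod.snd hu1)
    have hauz : G.Adj u z := adj1 u z (congrArg Prod.fst hu2)
    rcases (hls u x z hxnez).1 haux hauz with h | h
    · exact hnxz h
    · exact hnzx h
  exact ⟨hi2, by omega⟩
end

section
/- Let Γ be a locally semicomplete commutative weakly distance-regular digraph in which (1,3) is mixed. If there exist vertices x,y,z and positive integers i,q with ∂̃(x,y)=(1,3), ∂̃(y,z)=(1,q) and ∂̃(x,z)=(2,i), then i = 2 and q ∈ {2,3}. -/
variable {V : Type*}

variable [Fintype V]

/-! ### Auxiliary lemmas -/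

theorem hasWalk_append {A : V → V → Prop} :
    ∀ {m n : ℕ} {x y z : V}, HasWalk A m x y → HasWalk A n y z → HasWalk A (m + n) x z
  | 0, n, x, y, z, h1, h2 => by
      have h1' : x = y := h1
      subst h1'
      simpa [Nat.zero_add] using h2
  | m + 1, n, x, y, z, h1, h2 => by
      obtain ⟨w, hw, h1'⟩ := h1
      have hrw : m + 1 + n = (m + n) + 1 := by omega
      rw [hrw]
      exact ⟨w, hw, hasWalk_append h1' h2⟩

theorem tdist_eq {A : V → V → Prop} {x y : V} {a b : ℕ} :
    tdist A x y = (a, b) ↔ ddist A x y = a ∧ ddist A y x = b := by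
  simp [tdist, Prod.ext_iff]

theorem tdist_eq' {A : V → V → Prop} {x y x' y' : V} :
    tdist A x y = tdist A x' y' ↔
      ddist A x y = ddist A x' y' ∧ ddist A y x = ddist A y' x' := by
  simp [tdist, Prod.ext_iff]

namespace WDRDigraph

variable (G : WDRDigraph V)

theorem walk_ddist (x y : V) : HasWalk G.Adj (ddist G.Adj x y) x y :=
  Nat.sInf_mem (G.strongly_connected x y)

theorem ddist_le {n : ℕ} {x y : V} (h : HasWalk G.Adj n x y) : ddist G.Adj x y ≤ n :=
  Nat.sInf_le h

theorem ddist_self (x : V) : ddist G.Adj x x = 0 :=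
  Nat.le_antisymm (G.ddist_le (show HasWalk G.Adj 0 x x from rfl)) (Nat.zero_le _)

theorem ddist_triangle (x y z : V) :
    ddist G.Adj x z ≤ ddist G.Adj x y + ddist G.Adj y z :=
  G.ddist_le (hasWalk_append (G.walk_ddist x y) (G.walk_ddist y z))

theorem eq_of_ddist_eq_zero {x y : V} (h : ddist G.Adj x y = 0) : x = y := by
  have hw := G.walk_ddist x y
  rw [h] at hw
  exact hw

theorem ddist_le_one_of_adj {x y : V} (h : G.Adj x y) : ddist G.Adj x y ≤ 1 :=
  G.ddist_le (show HasWalk G.Adj 1 x y from ⟨y, h, rfl⟩)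

theorem adj_of_ddist_eq_one {x y : V} (h : ddist G.Adj x y = 1) : G.Adj x y := by
  have hw := G.walk_ddist x y
  rw [h] at hw
  obtain ⟨w, hw1, hw2⟩ := hw
  have hw2' : w = y := hw2
  rwa [hw2'] at hw1

theorem ddist_ne_zero {x y : V} (h : x ≠ y) : ddist G.Adj x y ≠ 0 :=
  fun h0 => h (G.eq_of_ddist_eq_zero h0)

theorem ddist_eq_one {x y : V} (hne : x ≠ y) (h : G.Adj x y) : ddist G.Adj x y = 1 :=
  Nat.le_antisymm (G.ddist_le_one_of_adj h)
    (Nat.one_le_iff_ne_zero.mpr (G.ddist_ne_zero hne))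

theorem ddist_decomp {x y : V} {n : ℕ} (h : ddist G.Adj x y = n + 1) :
    ∃ w, G.Adj x w ∧ ddist G.Adj w y = n := by
  have hw := G.walk_ddist x y
  rw [h] at hw
  obtain ⟨w, haw, hwalk⟩ := hw
  refine ⟨w, haw, Nat.le_antisymm (G.ddist_le hwalk) ?_⟩
  by_contra hlt
  push_neg at hlt
  have h2 : HasWalk G.Adj (1 + ddist G.Adj w y) x y :=
    hasWalk_append (show HasWalk G.Adj 1 x w from ⟨w, haw, rfl⟩) (G.walk_ddist w y)
  have h3 := G.ddist_le h2
  omega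

theorem tdist_mem_tset (x y : V) : tdist G.Adj x y ∈ tset G.Adj := ⟨x, y, rfl⟩

theorem middle_nonempty {x y : V} {i j : ℕ × ℕ} (hp : G.p (tdist G.Adj x y) i j ≠ 0) :
    ∃ m, tdist G.Adj x m = i ∧ tdist G.Adj m y = j := by
  have h := G.card_inter i j x y
  have h2 : {z : V | tdist G.Adj x z = i ∧ tdist G.Adj z y = j}.ncard ≠ 0 := by
    rw [h]; exact hp
  obtain ⟨m, hm⟩ := Set.nonempty_of_ncard_ne_zero h2
  exact ⟨m, hm.1, hm.2⟩

theorem p_ne_zero (x y m : V) :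
    G.p (tdist G.Adj x y) (tdist G.Adj x m) (tdist G.Adj m y) ≠ 0 := by
  have h := G.card_inter (tdist G.Adj x m) (tdist G.Adj m y) x y
  have h2 : 0 < {z : V | tdist G.Adj x z = tdist G.Adj x m ∧
      tdist G.Adj z y = tdist G.Adj m y}.ncard :=
    (Set.ncard_pos (Set.toFinite _)).mpr ⟨m, rfl, rfl⟩
  rw [h] at h2
  omega

theorem swap_middle (hcomm : G.Commutative) (x y m : V) :
    ∃ m', tdist G.Adj x m' = tdist G.Adj m y ∧ tdist G.Adj m' y = tdist G.Adj x m := by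
  apply G.middle_nonempty
  rw [hcomm _ _ _ (G.tdist_mem_tset x y) (G.tdist_mem_tset m y) (G.tdist_mem_tset x m)]
  exact G.p_ne_zero x y m

theorem transfer_middle {x y x' y' : V} (h : tdist G.Adj x y = tdist G.Adj x' y') (m : V) :
    ∃ m', tdist G.Adj x' m' = tdist G.Adj x m ∧ tdist G.Adj m' y' = tdist G.Adj m y := by
  apply G.middle_nonempty
  rw [← h]
  exact G.p_ne_zero x y m

/-- Key step: if `(x,y)` has type `(1,3)`, `y → z`, `∂(x,z) = 2` and `∂(z,x) ≥ 3`,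
then `z` sends an arc to every out-neighbour `a` of `y` with `∂(a,x) = 2`. -/
theorem KL1 (hls : LocallySemicomplete G.Adj) {x y z : V}
    (hxy : tdist G.Adj x y = (1, 3)) (hyz : G.Adj y z)
    (hxz2 : ddist G.Adj x z = 2) (hzx : 3 ≤ ddist G.Adj z x) :
    ∀ a, G.Adj y a → ddist G.Adj a x = 2 → G.Adj z a := by
  intro a hya hax
  obtain ⟨hxy1, hyx3⟩ := tdist_eq.mp hxy
  have hza_ne : z ≠ a := fun h => by rw [h] at hzx; omega
  rcases (hls y z a hza_ne).1 hyz hya with h | h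
  · exact h
  · exfalso
    obtain ⟨b, hab, hbx⟩ := G.ddist_decomp (show ddist G.Adj a x = 1 + 1 by omega)
    have hbx1 : G.Adj b x := G.adj_of_ddist_eq_one hbx
    have hbz_ne : b ≠ z := fun hh => by rw [hh] at hbx; omega
    rcases (hls a b z hbz_ne).1 hab h with h2 | h2
    · have hx_ne_z : x ≠ z := by
        intro hh; rw [hh] at hxz2; have := G.ddist_self z; omega
      rcases (hls b x z hx_ne_z).1 hbx1 h2 with h3 | h3
      · have := G.ddist_le_one_of_adj h3; omega
      · have := G.ddist_le_one_of_adj h3; omega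
    · have t1 := G.ddist_triangle z b x
      have t2 := G.ddist_le_one_of_adj h2
      omega

/-- `P2`: in the presence of companions at distance `(2,3)`, any out-neighbour `a` of `y`
with `∂(a,x) = 2` (where `(x,y)` has type `(1,3)`) satisfies `∂(x,a) = 2`. -/
theorem P2 (hls : LocallySemicomplete G.Adj) (hcomm : G.Commutative)
    (hComp : ∀ u v : V, tdist G.Adj u v = (1, 3) →
      ∃ w, tdist G.Adj u w = (2, 3) ∧ G.Adj v w) :
    ∀ u v a : V, tdist G.Adj u v = (1, 3) → G.Adj v a → ddist G.Adj a u = 2 →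
      ddist G.Adj u a = 2 := by
  intro u v a huv hva hau
  obtain ⟨z', hz', hvz'⟩ := hComp u v huv
  obtain ⟨huz2, hz'u3⟩ := tdist_eq.mp hz'
  obtain ⟨huv1, hvu3⟩ := tdist_eq.mp huv
  have hz'a : G.Adj z' a := G.KL1 hls huv hvz' huz2 (by omega) a hva hau
  have hz'ne_a : z' ≠ a := fun h => by rw [h] at hz'u3; omega
  have hz'a1 : ddist G.Adj z' a = 1 := G.ddist_eq_one hz'ne_a hz'a
  obtain ⟨b1, hb1, hb2⟩ := G.swap_middle hcomm z' u a
  obtain ⟨e1, e2⟩ := tdist_eq'.mp hb1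
  obtain ⟨e3, e4⟩ := tdist_eq'.mp hb2
  have hub : ddist G.Adj u a ≤ 2 := by
    have t1 := G.ddist_triangle u v a
    have t2 := G.ddist_le_one_of_adj hva
    omega
  have hne0 : ddist G.Adj u a ≠ 0 := by
    intro h0
    have huaeq := G.eq_of_ddist_eq_zero h0
    rw [huaeq] at hau
    have := G.ddist_self a
    omega
  have hne1 : ddist G.Adj u a ≠ 1 := by
    intro h1
    have hb1z' : G.Adj b1 z' := G.adj_of_ddist_eq_one (by omega)
    have hb1u : G.Adj b1 u := G.adj_of_ddist_eq_one (by omega)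
    have hzu_ne : z' ≠ u := by
      intro h; rw [h] at hz'u3; have := G.ddist_self u; omega
    rcases (hls b1 z' u hzu_ne).1 hb1z' hb1u with h | h
    · have := G.ddist_le_one_of_adj h; omega
    · have := G.ddist_le_one_of_adj h; omega
  omega

/-- Basic distance facts about a `4`-circuit `u → v → s → t → u` whose first
arc has type `(1,3)`. -/
theorem circuit_facts (hls : LocallySemicomplete G.Adj) (hcomm : G.Commutative)
    (hComp : ∀ u v : V, tdist G.Adj u v = (1, 3) →
      ∃ w, tdist G.Adj u w = (2, 3) ∧ G.Adj v w)
    {u v s t : V} (huv : G.Adj u v) (hvs : G.Adj v s) (hst : G.Adj s t) (htu : G.Adj t u)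
    (huv13 : tdist G.Adj u v = (1, 3)) :
    ddist G.Adj v s = 1 ∧ ddist G.Adj s t = 1 ∧ ddist G.Adj t u = 1 ∧
      ddist G.Adj s u = 2 ∧ ddist G.Adj u s = 2 ∧
      ddist G.Adj v t = 2 ∧ ddist G.Adj t v = 2 := by
  obtain ⟨huv1, hvu3⟩ := tdist_eq.mp huv13
  have hP2 := G.P2 hls hcomm hComp
  have hvs1 : ddist G.Adj v s = 1 := by
    refine G.ddist_eq_one (fun h => ?_) hvs
    rw [h] at hvs; exact G.loopless s hvs
  have hst1 : ddist G.Adj s t = 1 := by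
    refine G.ddist_eq_one (fun h => ?_) hst
    rw [h] at hst; exact G.loopless t hst
  have htu1 : ddist G.Adj t u = 1 := by
    refine G.ddist_eq_one (fun h => ?_) htu
    rw [h] at htu; exact G.loopless u htu
  have hsu2 : ddist G.Adj s u = 2 := by
    have hle : ddist G.Adj s u ≤ 2 := by
      have h1 := G.ddist_triangle s t u; omega
    have hne0 : ddist G.Adj s u ≠ 0 := by
      intro h0
      have h := G.eq_of_ddist_eq_zero h0
      rw [h] at hvs
      have := G.ddist_le_one_of_adj hvs
      omega
    have hne1 : ddist G.Adj s u ≠ 1 := by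
      intro h1
      have := G.ddist_triangle v s u
      omega
    omega
  have hvt2 : ddist G.Adj v t = 2 := by
    have hle : ddist G.Adj v t ≤ 2 := by
      have h1 := G.ddist_triangle v s t; omega
    have hne0 : ddist G.Adj v t ≠ 0 := by
      intro h0
      have h := G.eq_of_ddist_eq_zero h0
      rw [← h] at htu
      have := G.ddist_le_one_of_adj htu
      omega
    have hne1 : ddist G.Adj v t ≠ 1 := by
      intro h1
      have := G.ddist_triangle v t u
      omega
    omega
  have hus2 : ddist G.Adj u s = 2 := hP2 u v s huv13 hvs hsu2
  have htv2 : ddist G.Adj t v = 2 := by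
    obtain ⟨t2, ht2a, ht2b⟩ := G.swap_middle hcomm v u t
    obtain ⟨f1, f2⟩ := tdist_eq'.mp ht2a
    obtain ⟨g1, g2⟩ := tdist_eq'.mp ht2b
    have hvt2' : G.Adj v t2 := G.adj_of_ddist_eq_one (by omega)
    have := hP2 u v t2 huv13 hvt2' (by omega)
    omega
  exact ⟨hvs1, hst1, htu1, hsu2, hus2, hvt2, htv2⟩

/-- The final contradiction: there is no `4`-circuit `u → v → s → t → u` with
`∂̃(u,v) = (1,3)` and `∂̃(t,u) = (1,2)`, given companions at `(2,3)`. -/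
theorem CIRC2 (hls : LocallySemicomplete G.Adj) (hcomm : G.Commutative)
    (hComp : ∀ u v : V, tdist G.Adj u v = (1, 3) →
      ∃ w, tdist G.Adj u w = (2, 3) ∧ G.Adj v w)
    {u v s t : V} (huv : G.Adj u v) (hvs : G.Adj v s) (hst : G.Adj s t) (htu : G.Adj t u)
    (huv13 : tdist G.Adj u v = (1, 3)) (htu12 : tdist G.Adj t u = (1, 2)) : False := by
  have hP2 := G.P2 hls hcomm hComp
  obtain ⟨huv1, hvu3⟩ := tdist_eq.mp huv13
  obtain ⟨htu1, hut2⟩ := tdist_eq.mp htu12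
  obtain ⟨_, _, _, _, _, hvt2, htv2⟩ :=
    G.circuit_facts hls hcomm hComp huv hvs hst htu huv13
  obtain ⟨m, hum, hmt⟩ := G.ddist_decomp (show ddist G.Adj u t = 1 + 1 by omega)
  have hmt1 : G.Adj m t := G.adj_of_ddist_eq_one hmt
  have hm_ne_v : v ≠ m := by
    intro h; rw [← h] at hmt; omega
  have hv_ne_t : v ≠ t := by
    intro h; rw [h] at hvt2; have := G.ddist_self t; omega
  rcases (hls u v m hm_ne_v).1 huv hum with hAvm | hAmv
  · -- A v m
    have hmu_le : ddist G.Adj m u ≤ 2 := by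
      have := G.ddist_triangle m t u; omega
    have hm_ne_u : m ≠ u := fun h => G.loopless u (by rw [h] at hum; exact hum)
    have hmu_ne2 : ddist G.Adj m u ≠ 2 := by
      intro h2
      have := hP2 u v m huv13 hAvm h2
      have := G.ddist_le_one_of_adj hum
      omega
    have hmu1 : ddist G.Adj m u = 1 := by
      have := G.ddist_ne_zero hm_ne_u
      omega
    have hAmu : G.Adj m u := G.adj_of_ddist_eq_one hmu1
    obtain ⟨z0, hz0, hvz0⟩ := hComp u v huv13
    obtain ⟨huz0, hz0u⟩ := tdist_eq.mp hz0
    have hm_ne_z0 : m ≠ z0 := fun h => by rw [h] at hmu1; omega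
    rcases (hls v m z0 hm_ne_z0).1 hAvm hvz0 with h | h
    · -- A m z0
      have hu_ne_z0 : u ≠ z0 := by
        intro hh; rw [hh] at huz0; have := G.ddist_self z0; omega
      rcases (hls m u z0 hu_ne_z0).1 hAmu h with h2 | h2
      · have := G.ddist_le_one_of_adj h2; omega
      · have := G.ddist_le_one_of_adj h2; omega
    · -- A z0 m
      have t1 := G.ddist_triangle z0 m u
      have t2 := G.ddist_le_one_of_adj h
      omega
  · -- A m v
    rcases (hls m v t hv_ne_t).1 hAmv hmt1 with h | h
    · have := G.ddist_le_one_of_adj h; omega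
    · have := G.ddist_le_one_of_adj h; omega

end WDRDigraph

/-- in a locally semicomplete commutative weakly distance-regular digraph in which
`(1,3)` is mixed, if `∂̃(x,y) = (1,3)`, `∂̃(y,z) = (1,q)` and `∂̃(x,z) = (2,i)` with `i,q`
positive, then `i = 2` and `q ∈ {2,3}`. -/
theorem statement5 [Nonempty V] (G : WDRDigraph V)
    (hls : LocallySemicomplete G.Adj) (hcomm : G.Commutative)
    (hmixed : TypeMixed G.Adj 4) :
    ∀ (x y z : V) (i q : ℕ), 0 < i → 0 < q →
      tdist G.Adj x y = (1, 3) → tdist G.Adj y z = (1, q) → tdist G.Adj x z = (2, i) →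
      i = 2 ∧ (q = 2 ∨ q = 3) := by
  intro x y z i q hi hq hxy hyz hxz
  obtain ⟨hxy1, hyx3⟩ := tdist_eq.mp hxy
  obtain ⟨hyz1, hzy⟩ := tdist_eq.mp hyz
  obtain ⟨hxz2, hzx⟩ := tdist_eq.mp hxz
  have hAxy : G.Adj x y := G.adj_of_ddist_eq_one hxy1
  have hAyz : G.Adj y z := G.adj_of_ddist_eq_one hyz1
  have hi2 : 2 ≤ i := by
    have := G.ddist_triangle y z x
    have := G.ddist_le_one_of_adj hAyz
    omega
  have hq2 : 2 ≤ q := by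
    rcases Nat.lt_or_ge q 2 with h | h
    · exfalso
      have hAzy : G.Adj z y := G.adj_of_ddist_eq_one (by omega)
      have hxz_ne : x ≠ z := by
        intro hh; rw [hh] at hxz2; have := G.ddist_self z; omega
      rcases (hls y x z hxz_ne).2 hAxy hAzy with h2 | h2
      · have := G.ddist_le_one_of_adj h2; omega
      · have := G.ddist_le_one_of_adj h2; omega
    · exact h
  have hi3 : i ≤ 3 := by
    rcases Nat.lt_or_ge i 3 with h | h
    · omega
    · obtain ⟨a, hya, hax⟩ := G.ddist_decomp (show ddist G.Adj y x = 2 + 1 by omega)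
      have hza : G.Adj z a := G.KL1 hls hxy hAyz hxz2 (by omega) a hya hax
      have t1 := G.ddist_triangle z a x
      have t2 := G.ddist_le_one_of_adj hza
      omega
  rcases Nat.lt_or_ge i 3 with hcase | hcase
  · refine ⟨by omega, ?_⟩
    have t1 := G.ddist_triangle z x y
    omega
  · exfalso
    have hi_eq : i = 3 := by omega
    subst hi_eq
    -- companion existence for every (1,3)-arc, transferred from (x, y, z)
    have hComp : ∀ u v : V, tdist G.Adj u v = (1, 3) →
        ∃ w, tdist G.Adj u w = (2, 3) ∧ G.Adj v w := by
      intro u v huv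
      obtain ⟨w, hw1, hw2⟩ := G.transfer_middle (show tdist G.Adj x y = tdist G.Adj u v by
        rw [hxy, huv]) z
      refine ⟨w, by rw [hw1, hxz], ?_⟩
      obtain ⟨d1, d2⟩ := tdist_eq'.mp hw2
      exact G.adj_of_ddist_eq_one (by omega)
    -- extract the mixed circuit
    obtain ⟨x0, y0, h13, hnp⟩ := hmixed
    unfold PureArc at hnp
    push_neg at hnp
    obtain ⟨c, hcirc, hc0, hc1, k, hk⟩ := hnp
    have h41 : ((1 : ℕ), 4 - 1) = ((1 : ℕ), (3 : ℕ)) := by norm_num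
    rw [h41] at hk
    have e1 : (0 + 1 : ZMod 4) = 1 := by decide
    have e2 : (1 + 1 : ZMod 4) = 2 := by decide
    have e3 : (2 + 1 : ZMod 4) = 3 := by decide
    have e4 : (3 + 1 : ZMod 4) = 0 := by decide
    have hAuv := hcirc 0; rw [e1] at hAuv
    have hAvs := hcirc 1; rw [e2] at hAvs
    have hAst := hcirc 2; rw [e3] at hAst
    have hAtu := hcirc 3; rw [e4] at hAtu
    have huv13 : tdist G.Adj (c 0) (c 1) = (1, 3) := by rw [hc0, hc1]; exact h13
    obtain ⟨hvs1, hst1, htu1, hsu2, hus2, hvt2, htv2⟩ :=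
      G.circuit_facts hls hcomm hComp hAuv hAvs hAst hAtu huv13
    obtain ⟨huv1, hvu3⟩ := tdist_eq.mp huv13
    have hk4 := (by decide : ∀ j : ZMod 4, j = 0 ∨ j = 1 ∨ j = 2 ∨ j = 3) k
    rcases hk4 with hkv | hkv | hkv | hkv
    · rw [hkv, e1] at hk
      exact hk huv13
    · -- a0 := ddist s v ≠ 3, and a0 = 2
      rw [hkv, e2] at hk
      have ha0_ne3 : ddist G.Adj (c 2) (c 1) ≠ 3 := by
        intro h3; exact hk (tdist_eq.mpr ⟨hvs1, h3⟩)
      have ha0_ne1 : ddist G.Adj (c 2) (c 1) ≠ 1 := by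
        intro h1
        have hAsv : G.Adj (c 2) (c 1) := G.adj_of_ddist_eq_one h1
        have hv_ne_t : c 1 ≠ c 3 := by
          intro h; rw [h] at hvt2; have := G.ddist_self (c 3); omega
        rcases (hls (c 2) (c 1) (c 3) hv_ne_t).1 hAsv hAst with h | h
        · have := G.ddist_le_one_of_adj h; omega
        · have := G.ddist_le_one_of_adj h; omega
      have ha0_le : ddist G.Adj (c 2) (c 1) ≤ 3 := by
        have := G.ddist_triangle (c 2) (c 0) (c 1)
        have := G.ddist_triangle (c 2) (c 3) (c 0)
        omega
      have ha0_ne0 : ddist G.Adj (c 2) (c 1) ≠ 0 := by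
        intro h0
        have h := G.eq_of_ddist_eq_zero h0
        rw [← h] at hvs1
        have := G.ddist_self (c 2)
        omega
      have ha0 : ddist G.Adj (c 2) (c 1) = 2 := by omega
      -- move the 2 to the middle, then to the end
      obtain ⟨s', hs'1, hs'2⟩ := G.swap_middle hcomm (c 1) (c 3) (c 2)
      obtain ⟨f1, f2⟩ := tdist_eq'.mp hs'1
      obtain ⟨g1, g2⟩ := tdist_eq'.mp hs'2
      have hAvs' : G.Adj (c 1) s' := G.adj_of_ddist_eq_one (by omega)
      have hAs't : G.Adj s' (c 3) := G.adj_of_ddist_eq_one (by omega)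
      obtain ⟨t'', ht''1, ht''2⟩ := G.swap_middle hcomm s' (c 0) (c 3)
      obtain ⟨f3, f4⟩ := tdist_eq'.mp ht''1
      obtain ⟨g3, g4⟩ := tdist_eq'.mp ht''2
      have hAs't'' : G.Adj s' t'' := G.adj_of_ddist_eq_one (by omega)
      have hAt''u : G.Adj t'' (c 0) := G.adj_of_ddist_eq_one (by omega)
      have ht''u12 : tdist G.Adj t'' (c 0) = (1, 2) := by
        refine tdist_eq.mpr ⟨by omega, by omega⟩
      exact G.CIRC2 hls hcomm hComp hAuv hAvs' hAs't'' hAt''u huv13 ht''u12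
    · -- b0 := ddist t s ≠ 3, and b0 = 2
      rw [hkv, e3] at hk
      have hb0_ne3 : ddist G.Adj (c 3) (c 2) ≠ 3 := by
        intro h3; exact hk (tdist_eq.mpr ⟨hst1, h3⟩)
      have hb0_ne1 : ddist G.Adj (c 3) (c 2) ≠ 1 := by
        intro h1
        have hAts : G.Adj (c 3) (c 2) := G.adj_of_ddist_eq_one h1
        have hs_ne_u : c 2 ≠ c 0 := by
          intro h; rw [h] at hsu2; have := G.ddist_self (c 0); omega
        rcases (hls (c 3) (c 2) (c 0) hs_ne_u).1 hAts hAtu with h | h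
        · have := G.ddist_le_one_of_adj h; omega
        · have := G.ddist_le_one_of_adj h; omega
      have hb0_le : ddist G.Adj (c 3) (c 2) ≤ 3 := by
        have := G.ddist_triangle (c 3) (c 0) (c 2)
        have := G.ddist_triangle (c 0) (c 1) (c 2)
        omega
      have hb0_ne0 : ddist G.Adj (c 3) (c 2) ≠ 0 := by
        intro h0
        have h := G.eq_of_ddist_eq_zero h0
        rw [← h] at hst1
        have := G.ddist_self (c 3)
        omega
      have hb0 : ddist G.Adj (c 3) (c 2) = 2 := by omega
      obtain ⟨t', ht'1, ht'2⟩ := G.swap_middle hcomm (c 2) (c 0) (c 3)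
      obtain ⟨f1, f2⟩ := tdist_eq'.mp ht'1
      obtain ⟨g1, g2⟩ := tdist_eq'.mp ht'2
      have hAst' : G.Adj (c 2) t' := G.adj_of_ddist_eq_one (by omega)
      have hAt'u : G.Adj t' (c 0) := G.adj_of_ddist_eq_one (by omega)
      have ht'u12 : tdist G.Adj t' (c 0) = (1, 2) := by
        refine tdist_eq.mpr ⟨by omega, by omega⟩
      exact G.CIRC2 hls hcomm hComp hAuv hAvs hAst' hAt'u huv13 ht'u12
    · -- c0 := ddist u t ≠ 3, and c0 = 2
      rw [hkv, e4] at hk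
      have hc0_ne3 : ddist G.Adj (c 0) (c 3) ≠ 3 := by
        intro h3; exact hk (tdist_eq.mpr ⟨htu1, h3⟩)
      have hc0_ne1 : ddist G.Adj (c 0) (c 3) ≠ 1 := by
        intro h1
        have hAut : G.Adj (c 0) (c 3) := G.adj_of_ddist_eq_one h1
        have hv_ne_t : c 1 ≠ c 3 := by
          intro h; rw [h] at hvt2; have := G.ddist_self (c 3); omega
        rcases (hls (c 0) (c 1) (c 3) hv_ne_t).1 hAuv hAut with h | h
        · have := G.ddist_le_one_of_adj h; omega
        · have := G.ddist_le_one_of_adj h; omega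
      have hc0_le : ddist G.Adj (c 0) (c 3) ≤ 3 := by
        have := G.ddist_triangle (c 0) (c 2) (c 3)
        omega
      have hc0_ne0 : ddist G.Adj (c 0) (c 3) ≠ 0 := by
        intro h0
        have h := G.eq_of_ddist_eq_zero h0
        rw [h] at hAtu
        exact G.loopless (c 3) hAtu
      have hc0 : ddist G.Adj (c 0) (c 3) = 2 := by omega
      have htu12 : tdist G.Adj (c 3) (c 0) = (1, 2) := tdist_eq.mpr ⟨htu1, hc0⟩
      exact G.CIRC2 hls hcomm hComp hAuv hAvs hAst hAtu huv13 htu12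
end

section
/- Let Γ be a locally semicomplete commutative weakly distance-regular digraph and let q > 3 be such that (1,q-1) ∈ ∂̃(Γ) and (1,q-1) is pure. Then: (1) p^{(2,q-2)}_{(1,q-1),(1,q-1)} = k_{1,q-1}; (2) for every l with 1 ≤ l ≤ q-1 and every path (w_0,w_1,…,w_l) all of whose arcs are of type (1,q-1), ∂̃(w_0,w_l)=(l,q-l) (i.e. Γ_{1,q-1}^l = {Γ_{l,q-l}} for 1 ≤ l < q); (3) for all vertices x,y,z with ∂̃(x,y)=(2,q-2) and ∂̃(y,z)=(q-1,1), ∂̃(x,z)=(1,q-1) (i.e. Γ_{2,q-2}Γ_{q-1,1}={Γ_{1,q-1}}); (4) if p^{(1,r-1)}_{(1,q-1),(q-1,1)} ≠ 0 for some r, then for all vertices x,y,z with ∂̃(x,y)=(1,r-1) and ∂̃(y,z)=(1,q-1), one has ∂̃(x,z)=(1,q-1) (i.e. Γ_{1,r-1}Γ_{1,q-1}={Γ_{1,q-1}}). -/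
variable {V : Type*}

variable [Fintype V]

/-! ### Auxiliary walk and distance lemmas -/

section AuxWalk

variable {A : V → V → Prop}

lemma aux_hasWalk_append : ∀ {m n : ℕ} {x y z : V},
    HasWalk A m x y → HasWalk A n y z → HasWalk A (m + n) x z := by
  intro m
  induction m with
  | zero =>
    intro n x y z h1 h2
    have hxy : x = y := h1
    rw [Nat.zero_add, hxy]
    exact h2
  | succ m ih =>
    rintro n x y z ⟨w, hw, h1⟩ h2
    have : m + 1 + n = (m + n) + 1 := by omega
    rw [this]
    exact ⟨w, hw, ih h1 h2⟩

lemma aux_hasWalk_of_chain (f : ℕ → V) :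
    ∀ (n a : ℕ), (∀ i, a ≤ i → i < a + n → A (f i) (f (i + 1))) →
      HasWalk A n (f a) (f (a + n)) := by
  intro n
  induction n with
  | zero => intro a _; rfl
  | succ n ih =>
    intro a h
    refine ⟨f (a + 1), h a le_rfl (by omega), ?_⟩
    have := ih (a + 1) (fun i h1 h2 => h i (by omega) (by omega))
    have e : a + 1 + n = a + (n + 1) := by omega
    rwa [e] at this

lemma aux_walk_fn : ∀ {n : ℕ} {x y : V}, HasWalk A n x y →
    ∃ f : ℕ → V, f 0 = x ∧ f n = y ∧ ∀ i < n, A (f i) (f (i + 1)) := by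
  intro n
  induction n with
  | zero =>
    intro x y h
    have hxy : x = y := h
    exact ⟨fun _ => x, rfl, hxy ▸ rfl, by omega⟩
  | succ n ih =>
    rintro x y ⟨z, hxz, hw⟩
    obtain ⟨f, hf0, hfn, hfa⟩ := ih hw
    refine ⟨fun i => match i with | 0 => x | (j+1) => f j, rfl, hfn, ?_⟩
    intro i hi
    match i with
    | 0 => simpa [hf0] using hxz
    | (j+1) => exact hfa j (by omega)

variable (hconn : ∀ x y : V, ∃ n, HasWalk A n x y)
include hconn

lemma aux_ddist_spec (x y : V) : HasWalk A (ddist A x y) x y :=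
  Nat.sInf_mem (hconn x y)

omit hconn in
lemma aux_ddist_le {n : ℕ} {x y : V} (h : HasWalk A n x y) : ddist A x y ≤ n :=
  Nat.sInf_le h

omit hconn in
lemma aux_ddist_self (x : V) : ddist A x x = 0 :=
  Nat.le_zero.mp (aux_ddist_le (show HasWalk A 0 x x from rfl))

lemma aux_eq_of_ddist_zero {x y : V} (h : ddist A x y = 0) : x = y := by
  have := aux_ddist_spec hconn x y
  rw [h] at this
  exact this

lemma aux_ddist_triangle (x y z : V) :
    ddist A x z ≤ ddist A x y + ddist A y z :=
  aux_ddist_le (aux_hasWalk_append (aux_ddist_spec hconn x y) (aux_ddist_spec hconn y z))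

lemma aux_adj_of_ddist_one {x y : V} (h : ddist A x y = 1) : A x y := by
  have hw := aux_ddist_spec hconn x y
  rw [h] at hw
  obtain ⟨z, hz, hzy⟩ := hw
  have : z = y := hzy
  rwa [this] at hz

omit hconn in
lemma aux_ddist_le_one_of_adj {x y : V} (h : A x y) : ddist A x y ≤ 1 :=
  aux_ddist_le ⟨y, h, rfl⟩

omit hconn in
lemma aux_tdist_fst {x y : V} {a b : ℕ} (h : tdist A x y = (a, b)) : ddist A x y = a :=
  congrArg Prod.fst h

omit hconn in
lemma aux_tdist_snd {x y : V} {a b : ℕ} (h : tdist A x y = (a, b)) : ddist A y x = b :=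
  congrArg Prod.snd h

omit hconn in
lemma aux_tdist_self (x : V) : tdist A x x = (0, 0) := by
  unfold tdist
  rw [aux_ddist_self (A := A) x]

omit hconn in
lemma aux_tdist_rev {x y : V} {a b : ℕ} (h : tdist A x y = (a, b)) :
    tdist A y x = (b, a) := by
  unfold tdist at h ⊢
  exact Prod.ext (congrArg Prod.snd h) (congrArg Prod.fst h)

lemma aux_adj_of_tdist {x y : V} {s : ℕ} (h : tdist A x y = (1, s)) : A x y :=
  aux_adj_of_ddist_one hconn (aux_tdist_fst h)

lemma aux_tdist_mk (x y : V) : tdist A x y = (ddist A x y, ddist A y x) := rfl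

end AuxWalk

/-! ### Pure periodic walks -/

set_option linter.unusedSectionVars false

/-- A periodic pure walk: a `q`-periodic biinfinite walk all of whose arcs are pure. -/
def IsPW (A : V → V → Prop) (q : ℕ) (g : ℕ → V) : Prop :=
  (∀ n, g (n + q) = g n) ∧ ∀ n, tdist A (g n) (g (n + 1)) = (1, q - 1)

section AuxPW

variable {A : V → V → Prop} {q : ℕ} {g : ℕ → V}
variable (hconn : ∀ x y : V, ∃ n, HasWalk A n x y)
include hconn

lemma aux_pw_adj (hg : IsPW A q g) (n : ℕ) : A (g n) (g (n + 1)) :=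
  aux_adj_of_tdist hconn (hg.2 n)

/-- Distances along a pure circuit. -/
lemma aux_pw_tdist (hg : IsPW A q g) (a l : ℕ) (h1 : 1 ≤ l) (h2 : l ≤ q - 1)
    (hq : 3 < q) : tdist A (g a) (g (a + l)) = (l, q - l) := by
  have hadj : ∀ n, A (g n) (g (n + 1)) := aux_pw_adj hconn hg
  have hwalk : ∀ b m : ℕ, HasWalk A m (g b) (g (b + m)) := fun b m =>
    aux_hasWalk_of_chain g m b (fun i _ _ => hadj i)
  have dfle : ddist A (g a) (g (a + l)) ≤ l := aux_ddist_le (hwalk a l)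
  have dble : ddist A (g (a + l)) (g a) ≤ q - l := by
    have hw := hwalk (a + l) (q - l)
    have e : a + l + (q - l) = a + q := by omega
    rw [e, hg.1 a] at hw
    exact aux_ddist_le hw
  have dbge : q - l ≤ ddist A (g (a + l)) (g a) := by
    have h1' : ddist A (g (a + 1)) (g a) = q - 1 := aux_tdist_snd (hg.2 a)
    have htri := aux_ddist_triangle hconn (g (a + 1)) (g (a + l)) (g a)
    have hw : ddist A (g (a + 1)) (g (a + l)) ≤ l - 1 := by
      have hw' := hwalk (a + 1) (l - 1)
      have e : a + 1 + (l - 1) = a + l := by omega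
      rw [e] at hw'
      exact aux_ddist_le hw'
    omega
  have dfge : l ≤ ddist A (g a) (g (a + l)) := by
    have h1' : ddist A (g (a + l + 1)) (g (a + l)) = q - 1 := aux_tdist_snd (hg.2 (a + l))
    have htri := aux_ddist_triangle hconn (g (a + l + 1)) (g a) (g (a + l))
    have hw : ddist A (g (a + l + 1)) (g a) ≤ q - l - 1 := by
      have hw' := hwalk (a + l + 1) (q - l - 1)
      have e : a + l + 1 + (q - l - 1) = a + q := by omega
      rw [e, hg.1 a] at hw'
      exact aux_ddist_le hw'
    omega
  exact Prod.ext (le_antisymm dfle dfge) (le_antisymm dble dbge)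

omit hconn in
lemma aux_periodic_mod (hq : 3 < q) (hper : ∀ n : ℕ, g (n + q) = g n) :
    ∀ a : ℕ, g a = g (a % q) := by
  intro a
  induction a using Nat.strong_induction_on with
  | _ a ih =>
    rcases lt_or_ge a q with h | h
    · rw [Nat.mod_eq_of_lt h]
    · have e : a = (a - q) + q := by omega
      calc g a = g ((a - q) + q) := by rw [← e]
        _ = g (a - q) := hper _
        _ = g ((a - q) % q) := ih _ (by omega)
        _ = g (a % q) := by rw [← Nat.mod_eq_sub_mod h]

omit hconn in
lemma aux_periodic_congr (hq : 3 < q) (hper : ∀ n : ℕ, g (n + q) = g n) {a b : ℕ}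
    (h : (a : ZMod q) = (b : ZMod q)) : g a = g b := by
  have : a % q = b % q := (ZMod.natCast_eq_natCast_iff' a b q).mp h
  rw [aux_periodic_mod hq hper a, aux_periodic_mod hq hper b, this]

omit hconn in
/-- A closed `q`-walk containing one pure arc is entirely pure. -/
lemma aux_pw_of_closed (hq : 3 < q) (hpure : TypePure A q)
    (hper : ∀ n : ℕ, g (n + q) = g n) (hadj : ∀ n, A (g n) (g (n + 1)))
    (m : ℕ) (hm : tdist A (g m) (g (m + 1)) = (1, q - 1)) : IsPW A q g := by
  haveI : NeZero q := ⟨by omega⟩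
  have hvi : ∀ i : ZMod q, ((i.val : ℕ) : ZMod q) = i := fun i =>
    ZMod.natCast_rightInverse i
  set c : ZMod q → V := fun i => g (m + i.val) with hc
  have key : ∀ (i : ZMod q) (n : ℕ), (((m + i.val : ℕ) : ZMod q) = ((n : ℕ) : ZMod q)) →
      c i = g n := fun i n h => aux_periodic_congr hq hper h
  have hstep : ∀ i : ZMod q, c (i + 1) = g (m + i.val + 1) := by
    intro i
    apply key
    push_cast [hvi]
    ring
  have hcirc : IsCircuit A q c := by
    intro i
    rw [hstep i]
    exact hadj (m + i.val)
  have h0 : c 0 = g m := by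
    apply key
    push_cast [hvi]
    ring
  have h1 : c 1 = g (m + 1) := by
    apply key
    push_cast [hvi]
    ring
  have hm' : tdist A (c 0) (c 1) = (1, q - 1) := by rw [h0, h1]; exact hm
  have hall := hpure (c 0) (c 1) hm' c hcirc rfl rfl
  refine ⟨hper, fun n => ?_⟩
  have e0 : c ((n : ZMod q) - (m : ZMod q)) = g n := by
    apply key
    push_cast [hvi]
    ring
  have e1 : c (((n : ZMod q) - (m : ZMod q)) + 1) = g (n + 1) := by
    rw [hstep]
    apply aux_periodic_congr hq hper
    push_cast [hvi]
    ring
  have := hall ((n : ZMod q) - (m : ZMod q))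
  rwa [e0, e1] at this

omit hconn in
/-- Build a periodic pure walk from a cyclic vertex list with a pure arc. -/
lemma aux_pw_of_cycle (hq : 3 < q) (hpure : TypePure A q) (f : ℕ → V)
    (hfq : f q = f 0) (hadj : ∀ i < q, A (f i) (f (i + 1)))
    (m : ℕ) (hmq : m < q) (hm : tdist A (f m) (f (m + 1)) = (1, q - 1)) :
    IsPW A q (fun n => f (n % q)) ∧ (∀ i ≤ q, f (i % q) = f i) := by
  have h0 : 0 < q := by omega
  have hval : ∀ i ≤ q, f (i % q) = f i := by
    intro i hi
    rcases lt_or_ge i q with h | h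
    · rw [Nat.mod_eq_of_lt h]
    · have : i = q := by omega
      subst this
      rw [Nat.mod_self, hfq]
  have hsucc : ∀ n : ℕ, f ((n + 1) % q) = f (n % q + 1) := by
    intro n
    have h1 : (n + 1) % q = (n % q + 1) % q := by
      conv_lhs => rw [Nat.add_mod n 1 q]
      rw [Nat.mod_eq_of_lt (show 1 < q by omega)]
    rcases lt_or_ge (n % q + 1) q with h | h
    · rw [h1, Nat.mod_eq_of_lt h]
    · have he : n % q + 1 = q := by
        have := Nat.mod_lt n h0
        omega
      rw [h1, he, Nat.mod_self]
      exact hfq.symm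
  have hper : ∀ n : ℕ, f ((n + q) % q) = f (n % q) := by
    intro n
    rw [Nat.add_mod_right]
  have hadj' : ∀ n : ℕ, A (f (n % q)) (f ((n + 1) % q)) := by
    intro n
    rw [hsucc n]
    exact hadj (n % q) (Nat.mod_lt n h0)
  have hm' : tdist A (f (m % q)) (f ((m + 1) % q)) = (1, q - 1) := by
    rw [hsucc m, Nat.mod_eq_of_lt hmq]
    exact hm
  exact ⟨aux_pw_of_closed hq hpure hper hadj' m hm', hval⟩

end AuxPW

/-! ### Circuit constructions -/

section AuxCirc

variable {A : V → V → Prop} {q : ℕ}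
variable (hconn : ∀ x y : V, ∃ n, HasWalk A n x y) (hq : 3 < q)
    (hpure : TypePure A q)
include hconn hq hpure

/-- Every pure arc lies on a pure `q`-circuit. -/
lemma aux_circ1 {x y : V} (hxy : tdist A x y = (1, q - 1)) :
    ∃ g : ℕ → V, IsPW A q g ∧ g 0 = x ∧ g 1 = y := by
  have hd : ddist A y x = q - 1 := aux_tdist_snd hxy
  have hwk : HasWalk A (q - 1) y x := by
    have := aux_ddist_spec hconn y x
    rwa [hd] at this
  obtain ⟨p, hp0, hpn, hpa⟩ := aux_walk_fn hwk
  set f : ℕ → V := fun i => match i with | 0 => x | (j + 1) => p j with hf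
  have hf0 : f 0 = x := rfl
  have hfs : ∀ j : ℕ, f (j + 1) = p j := fun j => rfl
  have hfq : f q = f 0 := by
    have e : q = (q - 1) + 1 := by omega
    rw [e, hfs, hpn, hf0]
  have hadj : ∀ i < q, A (f i) (f (i + 1)) := by
    intro i hi
    match i with
    | 0 =>
      rw [hf0, hfs, hp0]
      exact aux_adj_of_tdist hconn hxy
    | (j + 1) =>
      rw [hfs, hfs]
      exact hpa j (by omega)
  have hm : tdist A (f 0) (f 1) = (1, q - 1) := by
    rw [hf0, hfs, hp0]; exact hxy
  obtain ⟨hpw, hval⟩ := aux_pw_of_cycle hq hpure f hfq hadj 0 (by omega) hm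
  refine ⟨fun n => f (n % q), hpw, ?_, ?_⟩
  · show f (0 % q) = x
    rw [hval 0 (by omega), hf0]
  · show f (1 % q) = y
    rw [hval 1 (by omega), hfs, hp0]

/-- A pure `q`-circuit through a path `x → y → z` with `∂(z,x) = q-2`. -/
lemma aux_circ2 {x y z : V} (hxy : tdist A x y = (1, q - 1)) (hyz : A y z)
    (hzx : ddist A z x = q - 2) :
    ∃ g : ℕ → V, IsPW A q g ∧ g 0 = x ∧ g 1 = y ∧ g 2 = z := by
  have hwk : HasWalk A (q - 2) z x := by
    have := aux_ddist_spec hconn z x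
    rwa [hzx] at this
  obtain ⟨p, hp0, hpn, hpa⟩ := aux_walk_fn hwk
  set f : ℕ → V := fun i => match i with | 0 => x | 1 => y | (j + 2) => p j with hf
  have hf0 : f 0 = x := rfl
  have hf1 : f 1 = y := rfl
  have hfs : ∀ j : ℕ, f (j + 2) = p j := fun j => rfl
  have hfq : f q = f 0 := by
    have e : q = (q - 2) + 2 := by omega
    rw [e, hfs, hpn, hf0]
  have hadj : ∀ i < q, A (f i) (f (i + 1)) := by
    intro i hi
    match i with
    | 0 =>
      rw [hf0, hf1]
      exact aux_adj_of_tdist hconn hxy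
    | 1 =>
      show A (f 1) (f 2)
      rw [hf1, hfs, hp0]
      exact hyz
    | (j + 2) =>
      rw [hfs, hfs]
      exact hpa j (by omega)
  have hm : tdist A (f 0) (f 1) = (1, q - 1) := by
    rw [hf0, hf1]; exact hxy
  obtain ⟨hpw, hval⟩ := aux_pw_of_cycle hq hpure f hfq hadj 0 (by omega) hm
  refine ⟨fun n => f (n % q), hpw, ?_, ?_, ?_⟩
  · show f (0 % q) = x
    rw [hval 0 (by omega), hf0]
  · show f (1 % q) = y
    rw [hval 1 (by omega), hf1]
  · show f (2 % q) = z
    rw [hval 2 (by omega), hfs, hp0]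

end AuxCirc

/-! ### Hamiltonian paths in semicomplete digraphs -/

section AuxHam

variable {R : V → V → Prop}

lemma aux_insert_chain (a : V) :
    ∀ l : List V, l.Chain' R → (∀ b ∈ l, R a b ∨ R b a) →
      ∃ l' : List V, l'.Perm (a :: l) ∧ l'.Chain' R ∧
        (l'.head? = some a ∨ l'.head? = l.head?) := by
  intro l
  induction l with
  | nil => exact fun _ _ => ⟨[a], List.Perm.refl _, List.isChain_singleton a, Or.inl rfl⟩
  | cons b t ih =>
    intro hchain htot
    by_cases hab : R a b
    · exact ⟨a :: b :: t, List.Perm.refl _, List.isChain_cons_cons.mpr ⟨hab, hchain⟩, Or.inl rfl⟩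
    · have hba : R b a := by
        rcases htot b (by simp) with h | h
        · exact absurd h hab
        · exact h
      obtain ⟨t', hperm, hchain', hhead⟩ := ih hchain.tail
        (fun c hc => htot c (by simp [hc]))
      refine ⟨b :: t', ?_, ?_, Or.inr rfl⟩
      · exact (hperm.cons b).trans (List.Perm.swap a b t)
      · refine List.isChain_cons.mpr ?_
        refine ⟨?_, hchain'⟩
        intro c hc
        rcases hhead with h | h
        · rw [h] at hc
          simp at hc
          rwa [hc] at hba
        · rw [h] at hc
          cases t with
          | nil => simp at hc
          | cons d s =>
            simp at hc
            have hbd := (List.isChain_cons_cons.mp hchain).1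
            rwa [hc] at hbd

lemma aux_hampath :
    ∀ l : List V, l.Nodup → (∀ a ∈ l, ∀ b ∈ l, a ≠ b → R a b ∨ R b a) →
      ∃ l' : List V, l'.Perm l ∧ l'.Chain' R := by
  intro l
  induction l with
  | nil => exact fun _ _ => ⟨[], List.Perm.refl _, List.isChain_nil⟩
  | cons a t ih =>
    intro hnd htot
    obtain ⟨t', hperm, hchain⟩ := ih (List.nodup_cons.mp hnd).2
      (fun x hx y hy hxy => htot x (by simp [hx]) y (by simp [hy]) hxy)
    have htot' : ∀ b ∈ t', R a b ∨ R b a := by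
      intro b hb
      have hbt : b ∈ t := hperm.mem_iff.mp hb
      refine htot a (by simp) b (by simp [hbt]) ?_
      rintro rfl
      exact (List.nodup_cons.mp hnd).1 hbt
    obtain ⟨l', hperm', hchain', _⟩ := aux_insert_chain a t' hchain htot'
    exact ⟨l', hperm'.trans (hperm.cons a), hchain'⟩

lemma aux_chain_good {P Q : V → Prop}
    (step : ∀ a b, P a → P b → R a b → Q a → Q b) :
    ∀ l : List V, l.Chain' R → (∀ z ∈ l, P z) →
      ∀ h : l ≠ [], Q (l.head h) → ∀ z ∈ l, Q z := by
  intro l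
  induction l with
  | nil => intro _ _ h; exact absurd rfl h
  | cons a t ih =>
    intro hchain hP h hQ z hz
    rcases List.mem_cons.mp hz with rfl | hzt
    · exact hQ
    · cases t with
      | nil => simp at hzt
      | cons b s =>
        have hab : R a b := (List.isChain_cons_cons.mp hchain).1
        have hQb : Q b := step a b (hP a (by simp)) (hP b (by simp)) hab hQ
        exact ih (List.isChain_cons_cons.mp hchain).2
          (fun w hw => hP w (by simp [hw])) (by simp) hQb z hzt

end AuxHam

/-! ### Main lemmas -/

section AuxMain

variable [Nonempty V] (G : WDRDigraph V) {q : ℕ}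

lemma aux_kval_const (i : ℕ × ℕ) (x : V) : kval G.Adj i x = G.p (0, 0) i i.swap := by
  have hset : {y : V | tdist G.Adj x y = i} =
      {z : V | tdist G.Adj x z = i ∧ tdist G.Adj z x = i.swap} := by
    ext z
    simp only [Set.mem_setOf_eq]
    exact ⟨fun h => ⟨h, by rw [← h]; rfl⟩, fun h => h.1⟩
  unfold kval
  rw [hset, G.card_inter i i.swap x x, aux_tdist_self x]

lemma aux_mem_tset_zero : ((0, 0) : ℕ × ℕ) ∈ tset G.Adj := by
  obtain ⟨x⟩ := ‹Nonempty V›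
  exact ⟨x, x, aux_tdist_self x⟩

lemma aux_mem_tset_swap {i : ℕ × ℕ} (h : i ∈ tset G.Adj) : i.swap ∈ tset G.Adj := by
  obtain ⟨x, y, h⟩ := h
  exact ⟨y, x, by rw [← h]; rfl⟩

variable (hcomm : G.Commutative) (hq : 3 < q)
    (hqT : ((1, q - 1) : ℕ × ℕ) ∈ tset G.Adj)

include hcomm hqT in
lemma aux_kin_eq (b : V) :
    {w : V | tdist G.Adj w b = (1, q - 1)}.ncard = kval G.Adj (1, q - 1) b := by
  have hset : {w : V | tdist G.Adj w b = (1, q - 1)} =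
      {w : V | tdist G.Adj b w = ((1, q - 1) : ℕ × ℕ).swap} := by
    ext w
    simp only [Set.mem_setOf_eq]
    constructor
    · intro h
      rw [show tdist G.Adj b w = (tdist G.Adj w b).swap from rfl, h]
    · intro h
      rw [show tdist G.Adj w b = (tdist G.Adj b w).swap from rfl, h, Prod.swap_swap]
  rw [hset]
  have h1 : {w : V | tdist G.Adj b w = ((1, q - 1) : ℕ × ℕ).swap}.ncard
      = kval G.Adj ((1, q - 1) : ℕ × ℕ).swap b := rfl
  rw [h1, aux_kval_const, aux_kval_const, Prod.swap_swap]
  exact hcomm (0, 0) (Prod.swap (1, q - 1)) (1, q - 1)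
    (aux_mem_tset_zero G) (aux_mem_tset_swap G hqT) hqT

include hqT in
lemma aux_kval_pos (x : V) : 0 < kval G.Adj (1, q - 1) x := by
  obtain ⟨xp, yp, hp⟩ := hqT
  have h1 : 0 < kval G.Adj (1, q - 1) xp :=
    (Set.ncard_pos (Set.toFinite _)).mpr ⟨yp, hp⟩
  rwa [aux_kval_const, ← aux_kval_const G _ x] at h1

variable (hls : LocallySemicomplete G.Adj) (hpure : TypePure G.Adj q)

include hcomm hq hqT hls hpure in
/-- Main lemma (1): `p^{(2,q-2)}_{(1,q-1),(1,q-1)} = k_{(1,q-1)}`. -/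
lemma aux_key1 (x₀ : V) :
    G.p (2, q - 2) (1, q - 1) (1, q - 1) = kval G.Adj (1, q - 1) x₀ := by
  have hconn := G.strongly_connected
  obtain ⟨xp, yp, hp⟩ := hqT
  set c₀ := xp with hc₀
  set S : Set V := {y : V | tdist G.Adj c₀ y = (1, q - 1)} with hS
  have hSfin : S.Finite := Set.toFinite _
  set l : List V := hSfin.toFinset.toList with hl
  have hmeml : ∀ z, z ∈ l ↔ z ∈ S := by
    intro z
    rw [hl, Finset.mem_toList, Set.Finite.mem_toFinset]
  have htot : ∀ a ∈ l, ∀ b ∈ l, a ≠ b → G.Adj a b ∨ G.Adj b a := by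
    intro a ha b hb hab
    have haS : tdist G.Adj c₀ a = (1, q - 1) := (hmeml a).mp ha
    have hbS : tdist G.Adj c₀ b = (1, q - 1) := (hmeml b).mp hb
    exact (hls c₀ a b hab).1 (aux_adj_of_tdist hconn haS) (aux_adj_of_tdist hconn hbS)
  obtain ⟨l', hperm, hchain⟩ := aux_hampath l hSfin.toFinset.nodup_toList htot
  have hypS : yp ∈ S := hp
  have hne : l' ≠ [] :=
    List.ne_nil_of_mem (hperm.mem_iff.mpr ((hmeml yp).mpr hypS))
  set y₀ := l'.head hne with hy₀
  have hy₀S : tdist G.Adj c₀ y₀ = (1, q - 1) :=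
    (hmeml y₀).mp (hperm.mem_iff.mp (List.head_mem hne))
  obtain ⟨g, hg, hg0, hg1⟩ := aux_circ1 hconn hq hpure hy₀S
  set b := g 2 with hb'
  have hb : tdist G.Adj c₀ b = (2, q - 2) := by
    have := aux_pw_tdist hconn hg 0 2 (by omega) (by omega) hq
    rwa [hg0] at this
  have hy₀b : tdist G.Adj y₀ b = (1, q - 1) := by
    have := aux_pw_tdist hconn hg 1 1 (by omega) (by omega) hq
    rwa [hg1, show (1 + 1 : ℕ) = 2 from rfl] at this
  have hc₀b : c₀ ≠ b := by
    intro h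
    rw [← h, aux_tdist_self] at hb
    rw [Prod.mk.injEq] at hb
    omega
  -- transfer lemma
  have step : ∀ u v : V, u ∈ S → v ∈ S → G.Adj u v →
      tdist G.Adj u b = (1, q - 1) → tdist G.Adj v b = (1, q - 1) := by
    intro u v huS hvS huv hub
    have hvb : v ≠ b := by
      intro h
      rw [h] at hvS
      have h2 := hvS.symm.trans hb
      rw [Prod.mk.injEq] at h2
      omega
    have hdbc : ddist G.Adj b c₀ = q - 2 := aux_tdist_snd hb
    rcases (hls u v b hvb).1 huv (aux_adj_of_tdist hconn hub) with h | h
    · -- v → b : build circuit (c₀, v, b, …)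
      obtain ⟨g', hg', h0', h1', h2'⟩ := aux_circ2 hconn hq hpure hvS h hdbc
      have := aux_pw_tdist hconn hg' 1 1 (by omega) (by omega) hq
      rwa [h1', show (1 + 1 : ℕ) = 2 from rfl, h2'] at this
    · -- b → v : impossible
      exfalso
      rcases (hls v c₀ b hc₀b).2 (aux_adj_of_tdist hconn hvS) h with h' | h'
      · have := aux_ddist_le_one_of_adj (A := G.Adj) h'
        have h2 := aux_tdist_fst hb
        omega
      · have := aux_ddist_le_one_of_adj (A := G.Adj) h'
        have h2 := aux_tdist_snd hb
        omega
  have hgood : ∀ z ∈ l', tdist G.Adj z b = (1, q - 1) := by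
    refine aux_chain_good (P := fun z => z ∈ S) (Q := fun z => tdist G.Adj z b = (1, q - 1))
      (fun a c ha hc hr hqa => step a c ha hc hr hqa) l' hchain ?_ hne hy₀b
    intro z hz
    exact (hmeml z).mp (hperm.mem_iff.mp hz)
  have hTS : {z : V | tdist G.Adj c₀ z = (1, q - 1) ∧ tdist G.Adj z b = (1, q - 1)} = S := by
    ext z
    simp only [Set.mem_setOf_eq, hS]
    constructor
    · exact fun h => h.1
    · intro h
      refine ⟨h, hgood z ?_⟩
      exact hperm.mem_iff.mpr ((hmeml z).mpr h)
  have hcard := G.card_inter (1, q - 1) (1, q - 1) c₀ b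
  rw [hb, hTS] at hcard
  rw [← hcard]
  show kval G.Adj (1, q - 1) c₀ = kval G.Adj (1, q - 1) x₀
  rw [aux_kval_const, aux_kval_const]

end AuxMain

section AuxMain2

variable [Nonempty V] (G : WDRDigraph V) {q : ℕ}
variable (hcomm : G.Commutative) (hq : 3 < q)
    (hqT : ((1, q - 1) : ℕ × ℕ) ∈ tset G.Adj)
    (hls : LocallySemicomplete G.Adj) (hpure : TypePure G.Adj q)
include hcomm hq hqT hls hpure

lemma aux_se_in {a b w : V} (hab : tdist G.Adj a b = (2, q - 2))
    (hw : tdist G.Adj a w = (1, q - 1)) : tdist G.Adj w b = (1, q - 1) := by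
  have hcard := G.card_inter (1, q - 1) (1, q - 1) a b
  rw [hab, aux_key1 G hcomm hq hqT hls hpure a] at hcard
  have hsub : {z : V | tdist G.Adj a z = (1, q - 1) ∧ tdist G.Adj z b = (1, q - 1)} ⊆
      {z : V | tdist G.Adj a z = (1, q - 1)} := fun z hz => hz.1
  have hle : {z : V | tdist G.Adj a z = (1, q - 1)}.ncard ≤
      {z : V | tdist G.Adj a z = (1, q - 1) ∧ tdist G.Adj z b = (1, q - 1)}.ncard := by
    rw [hcard]
    exact le_rfl
  have hTS := Set.eq_of_subset_of_ncard_le hsub hle (Set.toFinite _)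
  have hwT : w ∈ {z : V | tdist G.Adj a z = (1, q - 1) ∧ tdist G.Adj z b = (1, q - 1)} := by
    rw [hTS]
    exact hw
  exact hwT.2

lemma aux_se_out {a b w : V} (hab : tdist G.Adj a b = (2, q - 2))
    (hw : tdist G.Adj w b = (1, q - 1)) : tdist G.Adj a w = (1, q - 1) := by
  have hcard := G.card_inter (1, q - 1) (1, q - 1) a b
  rw [hab, aux_key1 G hcomm hq hqT hls hpure a] at hcard
  have hsub : {z : V | tdist G.Adj a z = (1, q - 1) ∧ tdist G.Adj z b = (1, q - 1)} ⊆
      {z : V | tdist G.Adj z b = (1, q - 1)} := fun z hz => hz.2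
  have hle : {z : V | tdist G.Adj z b = (1, q - 1)}.ncard ≤
      {z : V | tdist G.Adj a z = (1, q - 1) ∧ tdist G.Adj z b = (1, q - 1)}.ncard := by
    have h1 := aux_kin_eq G hcomm hqT b
    rw [hcard, h1, aux_kval_const, aux_kval_const]
  have hTS := Set.eq_of_subset_of_ncard_le hsub hle (Set.toFinite _)
  have hwT : w ∈ {z : V | tdist G.Adj a z = (1, q - 1) ∧ tdist G.Adj z b = (1, q - 1)} := by
    rw [hTS]
    exact hw
  exact hwT.1

lemma aux_star {x y z : V} (hxy : tdist G.Adj x y = (1, q - 1))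
    (hyz : tdist G.Adj y z = (1, q - 1)) : tdist G.Adj x z = (2, q - 2) := by
  have hconn := G.strongly_connected
  obtain ⟨g, hg, hg0, hg1⟩ := aux_circ1 hconn hq hpure hyz
  have h2 : tdist G.Adj (g (q - 2)) y = (2, q - 2) := by
    have h := aux_pw_tdist hconn hg (q - 2) 2 (by omega) (by omega) hq
    have e : q - 2 + 2 = q := by omega
    rw [e] at h
    have e2 : g q = g 0 := by
      have := hg.1 0
      rwa [Nat.zero_add] at this
    rwa [e2, hg0] at h
  have hgx : tdist G.Adj (g (q - 2)) x = (1, q - 1) :=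
    aux_se_out G hcomm hq hqT hls hpure h2 hxy
  have hle : ddist G.Adj z x ≤ q - 2 := by
    have hw1 : HasWalk G.Adj (q - 3) (g 1) (g (1 + (q - 3))) :=
      aux_hasWalk_of_chain g (q - 3) 1 (fun i _ _ => aux_pw_adj hconn hg i)
    have e : 1 + (q - 3) = q - 2 := by omega
    rw [e, hg1] at hw1
    have hw2 : HasWalk G.Adj 1 (g (q - 2)) x := ⟨x, aux_adj_of_tdist hconn hgx, rfl⟩
    have hw3 := aux_hasWalk_append hw1 hw2
    have e2 : q - 3 + 1 = q - 2 := by omega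
    rw [e2] at hw3
    exact aux_ddist_le hw3
  have hge : q - 2 ≤ ddist G.Adj z x := by
    have h1 : ddist G.Adj y x = q - 1 := aux_tdist_snd hxy
    have h2' : ddist G.Adj y z = 1 := aux_tdist_fst hyz
    have := aux_ddist_triangle hconn y z x
    omega
  have hzx : ddist G.Adj z x = q - 2 := le_antisymm hle hge
  obtain ⟨g', hg', k0, k1, k2⟩ :=
    aux_circ2 hconn hq hpure hxy (aux_adj_of_tdist hconn hyz) hzx
  have h := aux_pw_tdist hconn hg' 0 2 (by omega) (by omega) hq
  rw [Nat.zero_add] at h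
  rwa [k0, k2] at h

lemma aux_key2 (l : ℕ) (h1 : 1 ≤ l) (h2 : l ≤ q - 1) (w : ℕ → V)
    (hw : ∀ i < l, tdist G.Adj (w i) (w (i + 1)) = (1, q - 1)) :
    tdist G.Adj (w 0) (w l) = (l, q - l) := by
  have hconn := G.strongly_connected
  obtain ⟨g, hg, hg0, hg1⟩ := aux_circ1 hconn hq hpure (hw 0 h1)
  have hgq : g q = g 0 := by
    have := hg.1 0
    rwa [Nat.zero_add] at this
  have R : ∀ j ≤ l, tdist G.Adj (w j) (g (j + 1)) = (1, q - 1) := by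
    intro j
    induction j with
    | zero =>
      intro _
      show tdist G.Adj (w 0) (g 1) = (1, q - 1)
      rw [hg1]
      exact hw 0 h1
    | succ j ih =>
      intro hj
      have Rj := ih (by omega)
      have s1 : tdist G.Adj (g (j + 1)) (g (j + 1 + 1)) = (1, q - 1) := hg.2 (j + 1)
      have s2 := aux_star G hcomm hq hqT hls hpure Rj s1
      have s3 := aux_se_in G hcomm hq hqT hls hpure s2 (hw j (by omega))
      exact s3
  have Rl := R l le_rfl
  have fwd_le : ddist G.Adj (w 0) (w l) ≤ l := by
    have hwk := aux_hasWalk_of_chain w l 0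
      (fun i hi1 hi2 => aux_adj_of_tdist hconn (hw i (by omega)))
    rw [Nat.zero_add] at hwk
    exact aux_ddist_le hwk
  have bwd_le : ddist G.Adj (w l) (w 0) ≤ q - l := by
    have hw1 : HasWalk G.Adj 1 (w l) (g (l + 1)) :=
      ⟨g (l + 1), aux_adj_of_tdist hconn Rl, rfl⟩
    have hw2 : HasWalk G.Adj (q - l - 1) (g (l + 1)) (g (l + 1 + (q - l - 1))) :=
      aux_hasWalk_of_chain g (q - l - 1) (l + 1) (fun i _ _ => aux_pw_adj hconn hg i)
    have e : l + 1 + (q - l - 1) = q := by omega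
    rw [e, hgq, hg0] at hw2
    have hw3 := aux_hasWalk_append hw1 hw2
    have e2 : 1 + (q - l - 1) = q - l := by omega
    rw [e2] at hw3
    exact aux_ddist_le hw3
  have bwd_ge : q - l ≤ ddist G.Adj (w l) (w 0) := by
    have hd1 : ddist G.Adj (w 1) (w 0) = q - 1 := aux_tdist_snd (hw 0 h1)
    have hd2 : ddist G.Adj (w 1) (w l) ≤ l - 1 := by
      have hwk := aux_hasWalk_of_chain w (l - 1) 1
        (fun i hi1 hi2 => aux_adj_of_tdist hconn (hw i (by omega)))
      have e : 1 + (l - 1) = l := by omega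
      rw [e] at hwk
      exact aux_ddist_le hwk
    have := aux_ddist_triangle hconn (w 1) (w l) (w 0)
    omega
  have fwd_ge : l ≤ ddist G.Adj (w 0) (w l) := by
    have hd1 : ddist G.Adj (g (l + 1)) (w l) = q - 1 := aux_tdist_snd Rl
    have hd2 : ddist G.Adj (g (l + 1)) (w 0) ≤ q - l - 1 := by
      have hwk : HasWalk G.Adj (q - l - 1) (g (l + 1)) (g (l + 1 + (q - l - 1))) :=
        aux_hasWalk_of_chain g (q - l - 1) (l + 1) (fun i _ _ => aux_pw_adj hconn hg i)
      have e : l + 1 + (q - l - 1) = q := by omega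
      rw [e, hgq, hg0] at hwk
      exact aux_ddist_le hwk
    have := aux_ddist_triangle hconn (g (l + 1)) (w 0) (w l)
    omega
  exact Prod.ext (le_antisymm fwd_le fwd_ge) (le_antisymm bwd_le bwd_ge)

lemma aux_key3 {x y z : V} (hxy : tdist G.Adj x y = (2, q - 2))
    (hyz : tdist G.Adj y z = (q - 1, 1)) : tdist G.Adj x z = (1, q - 1) :=
  aux_se_out G hcomm hq hqT hls hpure hxy (aux_tdist_rev hyz)

lemma aux_key4 (r : ℕ) (hr : G.p (1, r - 1) (1, q - 1) (q - 1, 1) ≠ 0)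
    (x y z : V) (hxy : tdist G.Adj x y = (1, r - 1))
    (hyz : tdist G.Adj y z = (1, q - 1)) : tdist G.Adj x z = (1, q - 1) := by
  have hcard := G.card_inter (1, q - 1) (q - 1, 1) x y
  rw [hxy] at hcard
  have hne : {v : V | tdist G.Adj x v = (1, q - 1) ∧
      tdist G.Adj v y = (q - 1, 1)}.Nonempty := by
    apply Set.nonempty_of_ncard_ne_zero
    rw [hcard]
    exact hr
  obtain ⟨w', hw1, hw2⟩ := hne
  have hyw : tdist G.Adj y w' = (1, q - 1) := by
    have := aux_tdist_rev hw2
    exact this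
  have hpos : 0 < {v : V | tdist G.Adj w' v = (1, q - 1)}.ncard :=
    aux_kval_pos G hqT w'
  obtain ⟨v, hv⟩ := (Set.ncard_pos (Set.toFinite _)).mp hpos
  have hxv := aux_star G hcomm hq hqT hls hpure hw1 hv
  have hyv := aux_star G hcomm hq hqT hls hpure hyw hv
  have hzv := aux_se_in G hcomm hq hqT hls hpure hyv hyz
  exact aux_se_out G hcomm hq hqT hls hpure hxv hzv

end AuxMain2
/-- in a locally semicomplete commutative weakly distance-regular digraph, if
`q > 3`, `(1,q-1) ∈ ∂̃(Γ)` and `(1,q-1)` is pure, then: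
(1) `p^{(2,q-2)}_{(1,q-1),(1,q-1)} = k_{1,q-1}`;
(2) `Γ_{1,q-1}^l = {Γ_{l,q-l}}` for `1 ≤ l < q`;
(3) `Γ_{2,q-2}Γ_{q-1,1} = {Γ_{1,q-1}}`;
(4) if `Γ_{1,r-1} ∈ Γ_{1,q-1}Γ_{q-1,1}`, then `Γ_{1,r-1}Γ_{1,q-1} = {Γ_{1,q-1}}`. -/
theorem statement14 [Nonempty V] (G : WDRDigraph V)
    (hls : LocallySemicomplete G.Adj) (hcomm : G.Commutative)
    (q : ℕ) (hq : 3 < q)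
    (hqT : ((1, q - 1) : ℕ × ℕ) ∈ tset G.Adj)
    (hpure : TypePure G.Adj q) :
    (∀ x : V, G.p (2, q - 2) (1, q - 1) (1, q - 1) = kval G.Adj (1, q - 1) x) ∧
    (∀ l : ℕ, 1 ≤ l → l ≤ q - 1 → ∀ w : ℕ → V,
      (∀ i < l, tdist G.Adj (w i) (w (i + 1)) = (1, q - 1)) →
      tdist G.Adj (w 0) (w l) = (l, q - l)) ∧
    (∀ x y z : V, tdist G.Adj x y = (2, q - 2) → tdist G.Adj y z = (q - 1, 1) →
      tdist G.Adj x z = (1, q - 1)) ∧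
    (∀ r : ℕ, G.p (1, r - 1) (1, q - 1) (q - 1, 1) ≠ 0 →
      ∀ x y z : V, tdist G.Adj x y = (1, r - 1) → tdist G.Adj y z = (1, q - 1) →
        tdist G.Adj x z = (1, q - 1)) := by
  exact ⟨fun x => aux_key1 G hcomm hq hqT hls hpure x,
    fun l h1 h2 w hw => aux_key2 G hcomm hq hqT hls hpure l h1 h2 w hw,
    fun x y z hxy hyz => aux_key3 G hcomm hq hqT hls hpure hxy hyz,
    fun r hr x y z hxy hyz => aux_key4 G hcomm hq hqT hls hpure r hr x y z hxy hyz⟩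
end
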